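/- Let μ be a probability measure on ℝ supported on [0, ∞) and define C(μ) := sup{ t ∈ ℝ : t ≥ 0 and μ̄(x)·e^{x t} → 0 as x → +∞ }. Then C is invariant under convolution: for every natural number k ≥ 1, C(μ^{∗k}) = C(μ). -/

import Mathlib

open MeasureTheory Filter Topology
open scoped ENNReal

/-- The tail function of a measure on `ℝ`: `μ̄(x) = μ((x, ∞))`, as a real number. -/
noncomputable def tail (μ : Measure ℝ) (x : ℝ) : ℝ := (μ (Set.Ioi x)).toReal

/-- The `k`-fold convolution power of a measure on `ℝ`, with `μ^{∗0} = δ₀` and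
`μ^{∗(k+1)} = μ^{∗k} ∗ μ` (so `μ^{∗1} = μ`). -/
noncomputable def convPow (μ : Measure ℝ) : ℕ → Measure ℝ
  | 0 => Measure.dirac 0
  | k + 1 => (convPow μ k).conv μ

/-- The parameter `C(μ) = sup { t ≥ 0 : μ̄(x)·e^{x t} → 0 as x → +∞ }`. -/
noncomputable def Cparam (μ : Measure ℝ) : ℝ :=
  sSup {t : ℝ | 0 ≤ t ∧ Tendsto (fun x : ℝ => tail μ x * Real.exp (x * t)) atTop (𝓝 0)}

namespace CparamAux

lemma tendsto_tailE (ρ : Measure ℝ) [IsFiniteMeasure ρ] :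
    Tendsto (fun x : ℝ => ρ (Set.Ioi x)) atTop (𝓝 0) := by
  have h := tendsto_measure_iInter_atTop (μ := ρ) (s := fun x : ℝ => Set.Ioi x)
    (fun i => measurableSet_Ioi.nullMeasurableSet)
    (fun i j hij => Set.Ioi_subset_Ioi hij) ⟨0, measure_ne_top ρ _⟩
  have he : ⋂ x : ℝ, Set.Ioi x = (∅ : Set ℝ) := by
    ext y
    simp only [Set.mem_iInter, Set.mem_Ioi, Set.mem_empty_iff_false, iff_false, not_forall, not_lt]
    exact ⟨y, le_refl y⟩
  rw [he, measure_empty] at h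
  exact h

lemma tendsto_tail (ρ : Measure ℝ) [IsFiniteMeasure ρ] :
    Tendsto (tail ρ) atTop (𝓝 0) := by
  have h := (ENNReal.tendsto_toReal (a := 0) (by simp)).comp (tendsto_tailE ρ)
  exact h

lemma zero_mem_set (ρ : Measure ℝ) [IsFiniteMeasure ρ] :
    (0 : ℝ) ∈ {t : ℝ | 0 ≤ t ∧
      Tendsto (fun x : ℝ => tail ρ x * Real.exp (x * t)) atTop (𝓝 0)} := by
  refine ⟨le_refl 0, ?_⟩
  simpa using tendsto_tail ρ

lemma convPow_prob (μ : Measure ℝ) [IsProbabilityMeasure μ] (k : ℕ) :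
    IsProbabilityMeasure (convPow μ k) := by
  induction k with
  | zero => rw [convPow]; infer_instance
  | succ k ih => rw [convPow]; exact Measure.probabilitymeasure_of_probabilitymeasures_conv _ _

lemma convPow_one (μ : Measure ℝ) [IsProbabilityMeasure μ] : convPow μ 1 = μ := by
  rw [convPow, convPow]
  exact Measure.dirac_zero_conv μ

lemma conv_Ioi (ρ μ : Measure ℝ) [SFinite ρ] [SFinite μ] (x : ℝ) :
    (ρ.conv μ) (Set.Ioi x) = ∫⁻ b, ρ (Set.Ioi (x - b)) ∂μ := by
  rw [Measure.conv, Measure.map_apply (by fun_prop) measurableSet_Ioi,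
    Measure.prod_apply_symm ((by fun_prop : Measurable fun p : ℝ × ℝ => p.1 + p.2)
      measurableSet_Ioi)]
  congr 1
  ext b
  congr 1
  ext a
  simp [sub_lt_iff_lt_add]

lemma le_conv (ρ μ : Measure ℝ) [SFinite ρ] [IsProbabilityMeasure μ]
    (hμ : μ (Set.Iio 0) = 0) (x : ℝ) :
    ρ (Set.Ioi x) ≤ (ρ.conv μ) (Set.Ioi x) := by
  rw [conv_Ioi]
  have h1 : μ (Set.Ici (0 : ℝ)) = 1 := by
    have h := measure_add_measure_compl (μ := μ) (measurableSet_Iio (a := (0 : ℝ)))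
    rw [hμ, zero_add] at h
    simpa [Set.compl_Iio] using h
  calc ρ (Set.Ioi x)
      = ∫⁻ b, (Set.Ici (0 : ℝ)).indicator (fun _ => ρ (Set.Ioi x)) b ∂μ := by
        rw [lintegral_indicator measurableSet_Ici, setLIntegral_const, h1, mul_one]
    _ ≤ ∫⁻ b, ρ (Set.Ioi (x - b)) ∂μ := by
        refine lintegral_mono fun b => ?_
        by_cases hb : b ∈ Set.Ici (0 : ℝ)
        · rw [Set.indicator_of_mem hb]
          refine measure_mono (Set.Ioi_subset_Ioi ?_)
          have : (0:ℝ) ≤ b := hb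
          linarith
        · rw [Set.indicator_of_notMem hb]
          exact zero_le

lemma le_convPow (μ : Measure ℝ) [IsProbabilityMeasure μ] (hμ : μ (Set.Iio 0) = 0)
    (k : ℕ) (hk : 1 ≤ k) (x : ℝ) :
    μ (Set.Ioi x) ≤ convPow μ k (Set.Ioi x) := by
  induction k, hk using Nat.le_induction with
  | base => rw [convPow_one]
  | succ k hk ih =>
    have hp : IsProbabilityMeasure (convPow μ k) := convPow_prob μ k
    calc μ (Set.Ioi x) ≤ convPow μ k (Set.Ioi x) := ih
      _ ≤ ((convPow μ k).conv μ) (Set.Ioi x) := le_conv _ _ hμ x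
      _ = convPow μ (k + 1) (Set.Ioi x) := by rw [convPow]

lemma tail_le_one (μ : Measure ℝ) [IsProbabilityMeasure μ] (y : ℝ) : tail μ y ≤ 1 := by
  have h : μ (Set.Ioi y) ≤ 1 := prob_le_one
  have := ENNReal.toReal_mono (by simp) h
  simpa [tail] using this

/-- From the tail decay at exponent `s`, get a uniform bound at any exponent `r ≤ s`. -/
lemma exists_bound (μ : Measure ℝ) [IsProbabilityMeasure μ] {r s : ℝ}
    (hr : 0 ≤ r) (hrs : r ≤ s)
    (h : Tendsto (fun x : ℝ => tail μ x * Real.exp (x * s)) atTop (𝓝 0)) :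
    ∃ K : ℝ, 1 ≤ K ∧ ∀ y : ℝ, μ (Set.Ioi y) ≤ ENNReal.ofReal (K * Real.exp (-(r * y))) := by
  have hs : 0 ≤ s := le_trans hr hrs
  obtain ⟨y0, hy0⟩ := Metric.tendsto_atTop.1 h 1 one_pos
  set m : ℝ := max y0 0 with hm
  have hm0 : 0 ≤ m := le_max_right _ _
  refine ⟨Real.exp (s * m), Real.one_le_exp (by positivity), fun y => ?_⟩
  have key : tail μ y ≤ Real.exp (s * m - r * y) := by
    rcases le_or_gt m y with hy | hy
    · have h0y : 0 ≤ y := le_trans hm0 hy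
      have h1 := hy0 y (le_trans (le_max_left _ _) hy)
      rw [Real.dist_eq, sub_zero] at h1
      have h2 : tail μ y * Real.exp (y * s) ≤ 1 := by
        have := (abs_le.1 h1.le).2
        linarith
      have h3 : tail μ y ≤ Real.exp (-(y * s)) := by
        rw [Real.exp_neg, ← one_div]
        rw [le_div_iff₀ (Real.exp_pos _)]
        exact h2
      refine h3.trans (Real.exp_le_exp.2 ?_)
      have ha : y * r ≤ y * s := mul_le_mul_of_nonneg_left hrs h0y
      have hb : 0 ≤ s * m := mul_nonneg hs hm0
      nlinarith
    · refine (tail_le_one μ y).trans (Real.one_le_exp ?_)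
      have ha : r * y ≤ r * m := mul_le_mul_of_nonneg_left hy.le hr
      have hb : r * m ≤ s * m := mul_le_mul_of_nonneg_right hrs hm0
      linarith
  have : μ (Set.Ioi y) = ENNReal.ofReal (tail μ y) := by
    rw [tail, ENNReal.ofReal_toReal (measure_ne_top μ _)]
  rw [this]
  refine ENNReal.ofReal_le_ofReal (key.trans (le_of_eq ?_))
  rw [← Real.exp_add]
  congr 1

/-- Finiteness of the exponential moment at exponent `r`, given tail decay at `s > r`. -/
lemma mgf_lt_top (μ : Measure ℝ) [IsProbabilityMeasure μ] (hμ : μ (Set.Iio 0) = 0)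
    {r s Ks : ℝ} (hr : 0 ≤ r) (hrs : r < s) (hKs : 0 ≤ Ks)
    (hK : ∀ y : ℝ, μ (Set.Ioi y) ≤ ENNReal.ofReal (Ks * Real.exp (-(s * y)))) :
    ∫⁻ b, ENNReal.ofReal (Real.exp (r * b)) ∂μ < ⊤ := by
  set g : ℕ → ℝ → ℝ≥0∞ := fun n =>
    (Set.Ico (n : ℝ) ((n : ℝ) + 1)).indicator
      (fun _ => ENNReal.ofReal (Real.exp (r * ((n : ℝ) + 1)))) with hg
  have hae : ∀ᵐ b ∂μ, (0 : ℝ) ≤ b := by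
    rw [ae_iff]
    have : {b : ℝ | ¬ (0:ℝ) ≤ b} = Set.Iio 0 := by ext b; simp [Set.mem_Iio, not_le]
    rw [this]; exact hμ
  have hstep : ∫⁻ b, ENNReal.ofReal (Real.exp (r * b)) ∂μ ≤ ∫⁻ b, ∑' n : ℕ, g n b ∂μ := by
    refine lintegral_mono_ae ?_
    filter_upwards [hae] with b hb
    have hbmem : b ∈ Set.Ico ((⌊b⌋₊ : ℝ)) ((⌊b⌋₊ : ℝ) + 1) :=
      ⟨Nat.floor_le hb, Nat.lt_floor_add_one b⟩
    calc ENNReal.ofReal (Real.exp (r * b))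
        ≤ ENNReal.ofReal (Real.exp (r * ((⌊b⌋₊ : ℝ) + 1))) := by
          refine ENNReal.ofReal_le_ofReal (Real.exp_le_exp.2 ?_)
          exact mul_le_mul_of_nonneg_left (Nat.lt_floor_add_one b).le hr
      _ ≤ ∑' n : ℕ, g n b := by
          refine le_trans (le_of_eq ?_) (ENNReal.le_tsum ⌊b⌋₊)
          simp [hg, Set.indicator_of_mem hbmem]
  have hmeas : ∀ n : ℕ, AEMeasurable (g n) μ := fun n =>
    (measurable_const.indicator measurableSet_Ico).aemeasurable
  rw [lintegral_tsum hmeas] at hstep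
  have hterm : ∀ n : ℕ, ∫⁻ b, g n b ∂μ ≤
      ENNReal.ofReal (Ks * Real.exp (r + s)) * ENNReal.ofReal (Real.exp (r - s)) ^ n := by
    intro n
    have h1 : ∫⁻ b, g n b ∂μ
        = ENNReal.ofReal (Real.exp (r * ((n : ℝ) + 1))) * μ (Set.Ico (n : ℝ) ((n : ℝ) + 1)) := by
      rw [lintegral_indicator measurableSet_Ico, setLIntegral_const]
    rw [h1]
    have h2 : μ (Set.Ico (n : ℝ) ((n : ℝ) + 1)) ≤
        ENNReal.ofReal (Ks * Real.exp (-(s * ((n : ℝ) - 1)))) := by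
      refine (measure_mono ?_).trans (hK ((n : ℝ) - 1))
      intro a ha
      have : (n : ℝ) ≤ a := ha.1
      simp only [Set.mem_Ioi]
      linarith
    calc ENNReal.ofReal (Real.exp (r * ((n : ℝ) + 1))) * μ (Set.Ico (n : ℝ) ((n : ℝ) + 1))
        ≤ ENNReal.ofReal (Real.exp (r * ((n : ℝ) + 1))) *
            ENNReal.ofReal (Ks * Real.exp (-(s * ((n : ℝ) - 1)))) := mul_le_mul_right h2 _
      _ = ENNReal.ofReal (Real.exp (r * ((n : ℝ) + 1)) * (Ks * Real.exp (-(s * ((n : ℝ) - 1))))) := by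
          rw [ENNReal.ofReal_mul (Real.exp_nonneg _)]
      _ = ENNReal.ofReal ((Ks * Real.exp (r + s)) * Real.exp ((r - s) * (n : ℝ))) := by
          congr 1
          calc Real.exp (r * ((n : ℝ) + 1)) * (Ks * Real.exp (-(s * ((n : ℝ) - 1))))
              = Ks * (Real.exp (r * ((n : ℝ) + 1)) * Real.exp (-(s * ((n : ℝ) - 1)))) := by ring
            _ = Ks * Real.exp (r * ((n : ℝ) + 1) + -(s * ((n : ℝ) - 1))) := by
                rw [Real.exp_add]
            _ = Ks * Real.exp ((r + s) + (r - s) * (n : ℝ)) := by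
                congr 2
                ring
            _ = Ks * (Real.exp (r + s) * Real.exp ((r - s) * (n : ℝ))) := by
                rw [Real.exp_add]
            _ = (Ks * Real.exp (r + s)) * Real.exp ((r - s) * (n : ℝ)) := by ring
      _ = ENNReal.ofReal (Ks * Real.exp (r + s)) * ENNReal.ofReal (Real.exp ((r - s) * (n : ℝ))) := by
          rw [ENNReal.ofReal_mul (by positivity)]
      _ = ENNReal.ofReal (Ks * Real.exp (r + s)) * ENNReal.ofReal (Real.exp (r - s)) ^ n := by
          congr 1
          rw [← ENNReal.ofReal_pow (Real.exp_nonneg _)]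
          congr 1
          rw [← Real.exp_nat_mul]
          congr 1
          ring
  have hsum : ∑' n : ℕ, ∫⁻ b, g n b ∂μ ≤
      ENNReal.ofReal (Ks * Real.exp (r + s)) *
        (1 - ENNReal.ofReal (Real.exp (r - s)))⁻¹ := by
    calc ∑' n : ℕ, ∫⁻ b, g n b ∂μ
        ≤ ∑' n : ℕ, ENNReal.ofReal (Ks * Real.exp (r + s)) *
            ENNReal.ofReal (Real.exp (r - s)) ^ n := ENNReal.tsum_le_tsum hterm
      _ = ENNReal.ofReal (Ks * Real.exp (r + s)) *
            ∑' n : ℕ, ENNReal.ofReal (Real.exp (r - s)) ^ n := ENNReal.tsum_mul_left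
      _ = _ := by rw [ENNReal.tsum_geometric]
  have hlt1 : ENNReal.ofReal (Real.exp (r - s)) < 1 := by
    rw [ENNReal.ofReal_lt_one]
    exact Real.exp_lt_one_iff.2 (by linarith)
  have hfin : ENNReal.ofReal (Ks * Real.exp (r + s)) *
      (1 - ENNReal.ofReal (Real.exp (r - s)))⁻¹ < ⊤ := by
    refine ENNReal.mul_lt_top ENNReal.ofReal_lt_top ?_
    rw [ENNReal.inv_lt_top]
    exact tsub_pos_iff_lt.2 hlt1
  exact lt_of_le_of_lt (hstep.trans hsum) hfin

/-- Exponential tail bound for convolution powers, by induction. -/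
lemma convPow_tail_le (μ : Measure ℝ) [IsProbabilityMeasure μ] {r K : ℝ}
    (hK0 : 0 ≤ K)
    (hK : ∀ y : ℝ, μ (Set.Ioi y) ≤ ENNReal.ofReal (K * Real.exp (-(r * y))))
    (k : ℕ) (hk : 1 ≤ k) (x : ℝ) :
    convPow μ k (Set.Ioi x) ≤ ENNReal.ofReal K *
      (∫⁻ b, ENNReal.ofReal (Real.exp (r * b)) ∂μ) ^ (k - 1) *
        ENNReal.ofReal (Real.exp (-(r * x))) := by
  set M : ℝ≥0∞ := ∫⁻ b, ENNReal.ofReal (Real.exp (r * b)) ∂μ with hM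
  induction k, hk using Nat.le_induction generalizing x with
  | base =>
    rw [convPow_one]
    simpa [ENNReal.ofReal_mul hK0] using hK x
  | succ k hk ih =>
    have hp : IsProbabilityMeasure (convPow μ k) := convPow_prob μ k
    have hform : convPow μ (k + 1) (Set.Ioi x) = ∫⁻ b, convPow μ k (Set.Ioi (x - b)) ∂μ := by
      rw [convPow]; exact conv_Ioi _ _ x
    rw [hform]
    calc ∫⁻ b, convPow μ k (Set.Ioi (x - b)) ∂μ
        ≤ ∫⁻ b, ENNReal.ofReal K * M ^ (k - 1) *
            ENNReal.ofReal (Real.exp (-(r * (x - b)))) ∂μ := lintegral_mono fun b => ih (x - b)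
      _ = ∫⁻ b, (ENNReal.ofReal K * M ^ (k - 1) * ENNReal.ofReal (Real.exp (-(r * x)))) *
            ENNReal.ofReal (Real.exp (r * b)) ∂μ := by
          refine lintegral_congr fun b => ?_
          have hsplit : ENNReal.ofReal (Real.exp (-(r * (x - b)))) =
              ENNReal.ofReal (Real.exp (-(r * x))) * ENNReal.ofReal (Real.exp (r * b)) := by
            rw [← ENNReal.ofReal_mul (Real.exp_nonneg _), ← Real.exp_add]
            congr 1
            ring
          rw [hsplit]
          ring
      _ = (ENNReal.ofReal K * M ^ (k - 1) * ENNReal.ofReal (Real.exp (-(r * x)))) * M := by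
          rw [lintegral_const_mul]
          exact (ENNReal.measurable_ofReal.comp (Real.measurable_exp.comp
            (measurable_const.mul measurable_id))).comp measurable_id
      _ = ENNReal.ofReal K * M ^ (k + 1 - 1) * ENNReal.ofReal (Real.exp (-(r * x))) := by
          have hpow : M ^ (k - 1) * M = M ^ k := by
            rw [← pow_succ]
            congr 1
            omega
          calc (ENNReal.ofReal K * M ^ (k - 1) * ENNReal.ofReal (Real.exp (-(r * x)))) * M
              = ENNReal.ofReal K * (M ^ (k - 1) * M) * ENNReal.ofReal (Real.exp (-(r * x))) := by
                ring
            _ = _ := by rw [hpow]; norm_num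

end CparamAux

open CparamAux in
/-- For a probability measure `μ` on `ℝ` supported on `[0, ∞)`, the parameter `C` is
invariant under convolution: `C(μ^{∗k}) = C(μ)` for every `k ≥ 1`. -/
theorem Cparam_convPow (μ : Measure ℝ) [IsProbabilityMeasure μ]
    (hμ : μ (Set.Iio 0) = 0) (k : ℕ) (hk : 1 ≤ k) :
    Cparam (convPow μ k) = Cparam μ := by
  have hp : IsProbabilityMeasure (convPow μ k) := convPow_prob μ k
  set Sμ : Set ℝ := {t : ℝ | 0 ≤ t ∧
    Tendsto (fun x : ℝ => tail μ x * Real.exp (x * t)) atTop (𝓝 0)} with hSμ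
  set Sν : Set ℝ := {t : ℝ | 0 ≤ t ∧
    Tendsto (fun x : ℝ => tail (convPow μ k) x * Real.exp (x * t)) atTop (𝓝 0)} with hSν
  have h0μ : (0 : ℝ) ∈ Sμ := zero_mem_set μ
  have h0ν : (0 : ℝ) ∈ Sν := zero_mem_set (convPow μ k)
  -- tail of convPow dominates tail of μ
  have htail_le : ∀ x : ℝ, tail μ x ≤ tail (convPow μ k) x := fun x =>
    ENNReal.toReal_mono (measure_ne_top _ _) (le_convPow μ hμ k hk x)
  -- A : Sν ⊆ Sμ
  have hsub : Sν ⊆ Sμ := by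
    rintro t ⟨ht0, htend⟩
    refine ⟨ht0, ?_⟩
    refine squeeze_zero (fun x => mul_nonneg ENNReal.toReal_nonneg (Real.exp_nonneg _))
      (fun x => ?_) htend
    exact mul_le_mul_of_nonneg_right (htail_le x) (Real.exp_nonneg _)
  -- B : if s ∈ Sμ and 0 ≤ t < s then t ∈ Sν
  have hB : ∀ s ∈ Sμ, ∀ t : ℝ, 0 ≤ t → t < s → t ∈ Sν := by
    rintro s ⟨hs0, hstend⟩ t ht0 hts
    set r : ℝ := (t + s) / 2 with hrdef
    have hr0 : 0 ≤ r := by rw [hrdef]; linarith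
    have hrs : r < s := by rw [hrdef]; linarith
    have htr : t < r := by rw [hrdef]; linarith
    obtain ⟨K, hK1, hK⟩ := exists_bound μ hr0 hrs.le hstend
    obtain ⟨Ks, hKs1, hKs⟩ := exists_bound μ hs0 le_rfl hstend
    have hMfin : ∫⁻ b, ENNReal.ofReal (Real.exp (r * b)) ∂μ < ⊤ :=
      mgf_lt_top μ hμ hr0 hrs (by linarith) hKs
    set M : ℝ≥0∞ := ∫⁻ b, ENNReal.ofReal (Real.exp (r * b)) ∂μ with hM
    have hbound := convPow_tail_le μ (by linarith : (0:ℝ) ≤ K) hK k hk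
    set C0 : ℝ := (ENNReal.ofReal K * M ^ (k - 1)).toReal with hC0
    have hfin : ENNReal.ofReal K * M ^ (k - 1) ≠ ⊤ :=
      (ENNReal.mul_lt_top ENNReal.ofReal_lt_top (ENNReal.pow_lt_top hMfin)).ne
    have htail_bd : ∀ x : ℝ, tail (convPow μ k) x ≤ C0 * Real.exp (-(r * x)) := by
      intro x
      have h1 := hbound x
      have h2 : (convPow μ k (Set.Ioi x)).toReal ≤
          (ENNReal.ofReal K * M ^ (k - 1) * ENNReal.ofReal (Real.exp (-(r * x)))).toReal := by
        refine ENNReal.toReal_mono ?_ h1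
        exact (ENNReal.mul_lt_top hfin.lt_top ENNReal.ofReal_lt_top).ne
      rw [ENNReal.toReal_mul, ENNReal.toReal_ofReal (Real.exp_nonneg _)] at h2
      exact h2
    refine ⟨ht0, ?_⟩
    have hC0' : 0 ≤ C0 := ENNReal.toReal_nonneg
    refine squeeze_zero (fun x => mul_nonneg ENNReal.toReal_nonneg (Real.exp_nonneg _))
      (g := fun x : ℝ => C0 * Real.exp ((t - r) * x)) (fun x => ?_) ?_
    · calc tail (convPow μ k) x * Real.exp (x * t)
          ≤ (C0 * Real.exp (-(r * x))) * Real.exp (x * t) :=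
            mul_le_mul_of_nonneg_right (htail_bd x) (Real.exp_nonneg _)
        _ = C0 * Real.exp ((t - r) * x) := by
            rw [mul_assoc, ← Real.exp_add]
            congr 2
            ring
    · have hlim : Tendsto (fun x : ℝ => (t - r) * x) atTop atBot := by
        apply Tendsto.const_mul_atTop_of_neg (by linarith) tendsto_id
      have := Real.tendsto_exp_atBot.comp hlim
      simpa using this.const_mul C0
  -- conclude
  rw [show Cparam (convPow μ k) = sSup Sν from rfl, show Cparam μ = sSup Sμ from rfl]
  rcases em (BddAbove Sμ) with hb | hb
  · have hbν : BddAbove Sν := hb.mono hsub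
    refine le_antisymm (csSup_le_csSup hb ⟨0, h0ν⟩ hsub) ?_
    refine csSup_le ⟨0, h0μ⟩ fun s hs => ?_
    by_contra hcon
    push_neg at hcon
    have h0le : (0 : ℝ) ≤ sSup Sν := le_csSup hbν h0ν
    set t : ℝ := (sSup Sν + s) / 2 with htdef
    have ht0 : 0 ≤ t := by rw [htdef]; linarith
    have hts : t < s := by rw [htdef]; linarith
    have htmem : t ∈ Sν := hB s hs t ht0 hts
    have : t ≤ sSup Sν := le_csSup hbν htmem
    rw [htdef] at this
    linarith
  · have hbν : ¬ BddAbove Sν := by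
      intro ⟨Mb, hMb⟩
      refine hb ⟨max Mb 0 + 1, fun s hs => ?_⟩
      by_contra hcon
      push_neg at hcon
      have ht : max Mb 0 + 1 ∈ Sν := hB s hs _ (by positivity) hcon
      have := hMb ht
      have : max Mb 0 + 1 ≤ max Mb 0 := le_trans this (le_max_left _ _)
      linarith
    rw [Real.sSup_of_not_bddAbove hbν, Real.sSup_of_not_bddAbove hb]
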